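/- Let T be a triangulated category with products and C a set of objects such that every C in C is weak cocompact with respect to any Σ^{≥0}C-cophantom inverse tower, and suppose C is closed under all shifts (Σ^ℤ C = C, after replacing C by its shift closure). If moreover the stable pair exists, then (^⊥(Σ^ℤ C), (^⊥(Σ^ℤ C))^⊥) is a stable torsion pair and (^⊥(Σ^ℤ C))^⊥ equals the smallest colocalizing subcategory of T containing C. -/

import Mathlib

open CategoryTheory CategoryTheory.Limits CategoryTheory.Pretriangulated

set_option linter.unusedSectionVars false
set_option linter.unusedVariables false
set_option maxHeartbeats 1000000

universe u

variable {T : Type u} [Category.{u} T] [Preadditive T] [HasZeroObject T]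
  [HasShift T ℤ] [∀ n : ℤ, (shiftFunctor T n).Additive] [Pretriangulated T]
  [HasProducts.{u} T] [HasProducts.{0} T]

/-- A colocalizing subcategory: a strictly full triangulated subcategory closed under
shifts, extensions and arbitrary products. -/
def Colocalizing (S : Set T) : Prop :=
  (∀ A B : T, (A ≅ B) → A ∈ S → B ∈ S) ∧
  (∀ A ∈ S, (A⟦(1 : ℤ)⟧ : T) ∈ S ∧ (A⟦(-1 : ℤ)⟧ : T) ∈ S) ∧
  (∀ (A B Z : T) (f : A ⟶ B) (g : B ⟶ Z) (h : Z ⟶ A⟦(1 : ℤ)⟧),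
    (Triangle.mk f g h ∈ distTriang T) → A ∈ S → Z ∈ S → B ∈ S) ∧
  (∀ (ι : Type u) (f : ι → T), (∀ i, f i ∈ S) → (∏ᶜ f : T) ∈ S)

section Aux

variable (C : Set T)

/-- The left orthogonal of all shifts of `C`. -/
def XclS : Set T := {A : T | ∀ c ∈ C, ∀ n : ℤ, ∀ f : A ⟶ (c⟦n⟧ : T), f = 0}

/-- The right orthogonal of `XclS`. -/
def YclS : Set T := {B : T | ∀ A ∈ XclS C, ∀ f : A ⟶ B, f = 0}

variable {C}

lemma XclS_shift (hshift : ∀ (n : ℤ), ∀ c ∈ C, (c⟦n⟧ : T) ∈ C)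
    {A : T} (hA : A ∈ XclS C) (m : ℤ) : (A⟦m⟧ : T) ∈ XclS C := by
  intro c hc n f
  have h0 := hA (c⟦n⟧) (hshift n c hc) (-m)
    (((shiftFunctorCompIsoId T m (-m) (by omega)).app A).inv ≫ (shiftFunctor T (-m)).map f)
  have h1 : (shiftFunctor T (-m)).map f = 0 := by
    rw [← cancel_epi ((shiftFunctorCompIsoId T m (-m) (by omega)).app A).inv, h0, comp_zero]
  apply (shiftFunctor T (-m)).map_injective
  rw [h1, Functor.map_zero]

lemma XclS_unshift (hshift : ∀ (n : ℤ), ∀ c ∈ C, (c⟦n⟧ : T) ∈ C)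
    {A : T} (hA : (A⟦(1:ℤ)⟧ : T) ∈ XclS C) : A ∈ XclS C := by
  intro c hc n f
  have h0 := hA (c⟦n⟧) (hshift n c hc) 1 ((shiftFunctor T (1:ℤ)).map f)
  apply (shiftFunctor T (1:ℤ)).map_injective
  rw [h0, Functor.map_zero]

lemma YclS_iso {A B : T} (e : A ≅ B) (hA : A ∈ YclS C) : B ∈ YclS C := by
  intro X hX f
  have h0 : f ≫ e.inv = 0 := hA X hX _
  rw [← cancel_mono e.inv, zero_comp]
  exact h0

lemma YclS_shift (hshift : ∀ (n : ℤ), ∀ c ∈ C, (c⟦n⟧ : T) ∈ C)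
    {B : T} (hB : B ∈ YclS C) (m : ℤ) : (B⟦m⟧ : T) ∈ YclS C := by
  intro X hX f
  have h0 := hB _ (XclS_shift hshift hX (-m))
    ((shiftFunctor T (-m)).map f ≫ ((shiftFunctorCompIsoId T m (-m) (by omega)).app B).hom)
  have h1 : (shiftFunctor T (-m)).map f = 0 := by
    rw [← cancel_mono ((shiftFunctorCompIsoId T m (-m) (by omega)).app B).hom, h0, zero_comp]
  apply (shiftFunctor T (-m)).map_injective
  rw [h1, Functor.map_zero]

lemma YclS_ext {A B Z : T} (f : A ⟶ B) (g : B ⟶ Z) (h : Z ⟶ A⟦(1 : ℤ)⟧)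
    (hT : Triangle.mk f g h ∈ distTriang T) (hA : A ∈ YclS C) (hZ : Z ∈ YclS C) :
    B ∈ YclS C := by
  intro X hX u
  have h1 : u ≫ g = 0 := hZ X hX _
  obtain ⟨v, hv⟩ := Triangle.coyoneda_exact₂ _ hT u h1
  have h2 : v = 0 := hA X hX v
  rw [hv, h2, zero_comp]; rfl

lemma YclS_prod {ι : Type*} (f : ι → T) [HasProduct f] (hf : ∀ i, f i ∈ YclS C) :
    (∏ᶜ f : T) ∈ YclS C := by
  intro X hX u
  apply Pi.hom_ext
  intro i
  rw [zero_comp]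
  exact hf i X hX _

lemma C_subset_YclS : C ⊆ YclS C := by
  intro c hc X hX f
  have h0 := hX c hc 0 (f ≫ ((shiftFunctorZero T ℤ).app c).inv)
  rw [← cancel_mono ((shiftFunctorZero T ℤ).app c).inv, zero_comp]
  exact h0

/-- Shifts of elements of `C` are in `YclS C`, directly from the definition of `XclS`. -/
lemma C_shift_mem_YclS (hshift : ∀ (n : ℤ), ∀ c ∈ C, (c⟦n⟧ : T) ∈ C) {c : T} (hc : c ∈ C)
    (n : ℤ) : (c⟦n⟧ : T) ∈ YclS C :=
  C_subset_YclS (hshift n c hc)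

/-- Factoring through `mor₁` of a distinguished triangle. -/
lemma factor_mor₁ {X₂ Y Q₂ W : T} {x₂ : X₂ ⟶ Y} {q₂ : Y ⟶ Q₂} {d₂ : Q₂ ⟶ (X₂⟦(1:ℤ)⟧ : T)}
    (hT : Triangle.mk x₂ q₂ d₂ ∈ distTriang T) (α : X₂ ⟶ W)
    (h : d₂ ≫ (shiftFunctor T (1:ℤ)).map α = 0) :
    ∃ θ : Y ⟶ W, α = x₂ ≫ θ := by
  have h2 : (Triangle.mk x₂ q₂ d₂).invRotate.mor₁ ≫ α = 0 := by
    have heq : (Triangle.mk x₂ q₂ d₂).invRotate.mor₁ =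
        -((shiftFunctor T (-1:ℤ)).map d₂ ≫ (shiftEquiv T (1:ℤ)).unitIso.inv.app X₂) := rfl
    rw [heq]; erw [Preadditive.neg_comp, Category.assoc, neg_eq_zero]
    have nat := (shiftEquiv T (1:ℤ)).unitIso.inv.naturality α
    dsimp at nat ⊢
    erw [← nat, ← Category.assoc, ← Functor.map_comp, h, Functor.map_zero, zero_comp]
  obtain ⟨θ, hθ⟩ := Triangle.yoneda_exact₂ _ (inv_rot_of_distTriang _ hT) α h2
  exact ⟨θ, hθ⟩

end Aux

section MinAux

variable (C S : Set T)

/-- Closure of a colocalizing subcategory under all integer shifts. -/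
lemma S_shift_all (hS : Colocalizing S) : ∀ (n : ℤ), ∀ s ∈ S, (s⟦n⟧ : T) ∈ S := by
  have h1 : ∀ s ∈ S, (s⟦(1:ℤ)⟧ : T) ∈ S := fun s hs => (hS.2.1 s hs).1
  have hm1 : ∀ s ∈ S, (s⟦(-1:ℤ)⟧ : T) ∈ S := fun s hs => (hS.2.1 s hs).2
  intro n
  induction n using Int.induction_on with
  | zero => intro s hs; exact hS.1 s _ ((shiftFunctorZero T ℤ).symm.app s) hs
  | succ k ih =>
      intro s hs
      exact hS.1 _ _ ((shiftFunctorAdd' T (k:ℤ) 1 (k+1) rfl).symm.app s) (h1 _ (ih s hs))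
  | pred k ih =>
      intro s hs
      exact hS.1 _ _ ((shiftFunctorAdd' T (-k:ℤ) (-1) (-(k:ℤ)-1) rfl).symm.app s)
        (hm1 _ (ih s hs))

/-- index for the `S∩Ycl`-coreflection. -/
abbrev corIdx (Y : T) : Type u := Σ s : {s : T // s ∈ S ∧ s ∈ YclS C}, Y ⟶ (s : T)

/-- the `S∩Ycl`-coreflection object. -/
noncomputable abbrev corObj (Y : T) : T := ∏ᶜ fun i : corIdx C S Y => ((i.1 : T) : T)

/-- the universal map into the coreflection. -/
noncomputable def corMap (Y : T) : Y ⟶ corObj C S Y := Pi.lift fun i => i.2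

lemma cor_univ {Y s' : T} (hs : s' ∈ S) (hy : s' ∈ YclS C) (h : Y ⟶ s') :
    corMap C S Y ≫ Pi.π _ (⟨⟨s', hs, hy⟩, h⟩ : corIdx C S Y) = h := by
  simp [corMap, corObj]

lemma corObj_mem_S (hS : Colocalizing S) (Y : T) : corObj C S Y ∈ S :=
  hS.2.2.2 _ _ (fun i => i.1.2.1)

lemma corObj_mem_Ycl (Y : T) : corObj C S Y ∈ YclS C :=
  YclS_prod _ (fun i => i.1.2.2)

/-- `ext` closure restated for a whole triangle. -/
lemma ext_mem (hS : Colocalizing S) (Tr : Triangle T) (hTr : Tr ∈ distTriang T)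
    (h1 : Tr.obj₁ ∈ S) (h3 : Tr.obj₃ ∈ S) : Tr.obj₂ ∈ S :=
  hS.2.2.1 Tr.obj₁ Tr.obj₂ Tr.obj₃ Tr.mor₁ Tr.mor₂ Tr.mor₃ hTr h1 h3

lemma ext_mem_Ycl (Tr : Triangle T) (hTr : Tr ∈ distTriang T)
    (h1 : Tr.obj₁ ∈ YclS C) (h3 : Tr.obj₃ ∈ YclS C) : Tr.obj₂ ∈ YclS C :=
  YclS_ext Tr.mor₁ Tr.mor₂ Tr.mor₃ hTr h1 h3

/-- conull maps (w.r.t. `S ∩ Ycl`). -/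
def IsCon {X Y : T} (φ : X ⟶ Y) : Prop :=
  ∀ (s' : T), s' ∈ S → s' ∈ YclS C → ∀ h : Y ⟶ s', φ ≫ h = 0

/-- KEY LEMMA: conull maps lift to conull maps through coreflection fibers. -/
lemma conull_lift (hshift : ∀ (n : ℤ), ∀ c ∈ C, (c⟦n⟧ : T) ∈ C) (hS : Colocalizing S)
    {Y X₁ : T} {x₁ : X₁ ⟶ Y} {d₁ : corObj C S Y ⟶ (X₁⟦(1:ℤ)⟧ : T)}
    (hT₁ : Triangle.mk x₁ (corMap C S Y) d₁ ∈ distTriang T)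
    {F : T} (ω : F ⟶ Y) (hω : IsCon C S ω) :
    ∃ ν : F ⟶ X₁, ν ≫ x₁ = ω ∧ IsCon C S ν := by
  -- second stage of the coresolution
  obtain ⟨Q₂, r, uu, hQ₂⟩ :=
    distinguished_cocone_triangle₁ (d₁ ≫ (shiftFunctor T (1:ℤ)).map (corMap C S X₁))
  have hQ₂S : Q₂ ∈ S := by
    refine ext_mem S hS (Triangle.mk r (d₁ ≫ (shiftFunctor T (1:ℤ)).map (corMap C S X₁))
      uu).invRotate (inv_rot_of_distTriang _ hQ₂) ?_ ?_
    · exact S_shift_all S hS (-1) _ (S_shift_all S hS 1 _ (corObj_mem_S C S hS X₁))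
    · exact corObj_mem_S C S hS Y
  have hQ₂Y : Q₂ ∈ YclS C := by
    refine ext_mem_Ycl C (Triangle.mk r (d₁ ≫ (shiftFunctor T (1:ℤ)).map (corMap C S X₁))
      uu).invRotate (inv_rot_of_distTriang _ hQ₂) ?_ ?_
    · exact YclS_shift hshift (YclS_shift hshift (corObj_mem_Ycl C S X₁) 1) (-1)
    · exact corObj_mem_Ycl C S Y
  -- lift of corMap through r
  have hcm : corMap C S Y ≫ (d₁ ≫ (shiftFunctor T (1:ℤ)).map (corMap C S X₁)) = 0 := by
    rw [← Category.assoc]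
    have h0 : corMap C S Y ≫ d₁ = 0 := comp_distTriang_mor_zero₂₃ _ hT₁
    rw [h0, zero_comp]
  obtain ⟨q₂, hq₂⟩ : ∃ q₂ : Y ⟶ Q₂, corMap C S Y = q₂ ≫ r := Triangle.coyoneda_exact₂ _ hQ₂ (corMap C S Y) hcm
  -- the second-stage triangle over Y
  obtain ⟨X₂, x₂, d₂, hT₂⟩ := distinguished_cocone_triangle₁ q₂
  -- fill
  obtain ⟨φ, hφ₁, hφ₃⟩ : ∃ φ : X₂ ⟶ X₁, x₂ ≫ 𝟙 Y = φ ≫ x₁ ∧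
      d₂ ≫ (shiftFunctor T (1:ℤ)).map φ = r ≫ d₁ := complete_distinguished_triangle_morphism₁
    (Triangle.mk x₂ q₂ d₂) (Triangle.mk x₁ (corMap C S Y) d₁) hT₂ hT₁ (𝟙 Y) r
    (hq₂.symm.trans (Category.id_comp _).symm)
  -- defect factoring
  have hd : d₂ ≫ (shiftFunctor T (1:ℤ)).map (φ ≫ corMap C S X₁) = 0 := by
    rw [Functor.map_comp, ← Category.assoc, hφ₃, Category.assoc]
    exact comp_distTriang_mor_zero₁₂ _ hQ₂
  obtain ⟨θ, hθ⟩ := factor_mor₁ hT₂ (φ ≫ corMap C S X₁) hd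
  -- lift ω through x₂
  have hωq : ω ≫ q₂ = 0 := hω Q₂ hQ₂S hQ₂Y q₂
  obtain ⟨l₂, hl₂⟩ : ∃ l₂ : F ⟶ X₂, ω = l₂ ≫ (Triangle.mk x₂ q₂ d₂).mor₁ := Triangle.coyoneda_exact₂ _ hT₂ ω hωq
  change ω = l₂ ≫ x₂ at hl₂
  refine ⟨l₂ ≫ φ, ?_, ?_⟩
  · rw [Category.assoc, ← hφ₁, Category.comp_id]
    exact hl₂.symm
  · intro s' hs hy h
    set idx : corIdx C S X₁ := ⟨⟨s', hs, hy⟩, h⟩ with hidx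
    have huniv : corMap C S X₁ ≫ Pi.π _ idx = h := cor_univ C S hs hy h
    calc (l₂ ≫ φ) ≫ h
        = (l₂ ≫ φ) ≫ corMap C S X₁ ≫ Pi.π _ idx := by rw [huniv]
      _ = l₂ ≫ (φ ≫ corMap C S X₁) ≫ Pi.π _ idx := by simp only [Category.assoc]
      _ = l₂ ≫ (x₂ ≫ θ) ≫ Pi.π _ idx := by rw [hθ]
      _ = (l₂ ≫ x₂) ≫ (θ ≫ Pi.π _ idx) := by simp only [Category.assoc]
      _ = ω ≫ (θ ≫ Pi.π _ idx) := by rw [← hl₂]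
      _ = 0 := hω s' hs hy _

/-- ℕ-indexed products stay in `S` (via reindexing along `ULift`). -/
lemma prodNat_mem (hS : Colocalizing S) (f : ℕ → T) (hf : ∀ n, f n ∈ S) :
    (∏ᶜ f : T) ∈ S := by
  have h1 : (∏ᶜ (f ∘ (Equiv.ulift.{u,0} : ULift.{u} ℕ ≃ ℕ)) : T) ∈ S :=
    hS.2.2.2 (ULift.{u} ℕ) _ (fun i => hf _)
  exact hS.1 _ _ (Pi.reindex (Equiv.ulift.{u,0}) f) h1

/-- Retract closure of a colocalizing subcategory (Bökstedt–Neeman). -/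
lemma retract_mem (hS : Colocalizing S) {B N : T} (hN : N ∈ S)
    (i : B ⟶ N) (p : N ⟶ B) (hip : i ≫ p = 𝟙 B) : B ∈ S := by
  classical
  set e : N ⟶ N := p ≫ i with he
  have hie : i ≫ e = i := by rw [he, ← Category.assoc, hip, Category.id_comp]
  have he2 : e ≫ e = e := by
    rw [he, Category.assoc, ← Category.assoc i p, hip, Category.id_comp]
  have h1e : (𝟙 N - e) ≫ (𝟙 N - e) = 𝟙 N - e := by
    simp only [Preadditive.sub_comp, Preadditive.comp_sub, Category.id_comp,
      Category.comp_id, he2]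
    abel
  have hPN : (∏ᶜ (fun _ : ℕ => N) : T) ∈ S := prodNat_mem S hS _ (fun _ => hN)
  set eh : (∏ᶜ (fun _ : ℕ => N) : T) ⟶ (∏ᶜ (fun _ : ℕ => N) : T) :=
    Pi.lift (fun j => Pi.π (fun _ : ℕ => N) (j+1) ≫ e) with heh
  -- the section of 𝟙 - eh
  set sc : ℕ → ((∏ᶜ (fun _ : ℕ => N) : T) ⟶ N) := fun j => Nat.rec (Pi.π (fun _ : ℕ => N) 0)
      (fun j sj => sj - Pi.π (fun _ : ℕ => N) j + Pi.π (fun _ : ℕ => N) (j+1) ≫ (𝟙 N - e)) j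
    with hsc
  have hscS : ∀ j, sc (j+1) =
      sc j - Pi.π (fun _ : ℕ => N) j + Pi.π (fun _ : ℕ => N) (j+1) ≫ (𝟙 N - e) := fun j => rfl
  have hinv : ∀ j, sc j ≫ (𝟙 N - e) = Pi.π (fun _ : ℕ => N) j ≫ (𝟙 N - e) := by
    intro j; induction j with
    | zero => rfl
    | succ j ih =>
        rw [hscS, Preadditive.add_comp, Preadditive.sub_comp, ih, Category.assoc, h1e]
        abel
  have hsce : ∀ j, sc (j+1) ≫ e = sc j ≫ e - Pi.π (fun _ : ℕ => N) j ≫ e := by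
    intro j
    rw [hscS, Preadditive.add_comp, Preadditive.sub_comp, Category.assoc]
    have : (𝟙 N - e) ≫ e = 0 := by
      simp only [Preadditive.sub_comp, Category.id_comp, he2]; abel
    rw [this, comp_zero, add_zero]
  have ehpi : ∀ j, eh ≫ Pi.π (fun _ : ℕ => N) j = Pi.π (fun _ : ℕ => N) (j+1) ≫ e := by
    intro j; rw [heh]; simp
  have hsec : Pi.lift sc ≫ (𝟙 (∏ᶜ (fun _ : ℕ => N) : T) - eh) = 𝟙 _ := by
    apply Pi.hom_ext; intro j
    have c1 : Pi.lift sc ≫ Pi.π (fun _ : ℕ => N) j = sc j := by simp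
    have c2 : Pi.lift sc ≫ eh ≫ Pi.π (fun _ : ℕ => N) j = sc (j+1) ≫ e := by
      rw [ehpi j, ← Category.assoc]; simp
    calc (Pi.lift sc ≫ (𝟙 _ - eh)) ≫ Pi.π (fun _ : ℕ => N) j
        = Pi.lift sc ≫ Pi.π (fun _ : ℕ => N) j
            - Pi.lift sc ≫ eh ≫ Pi.π (fun _ : ℕ => N) j := by
          simp only [Preadditive.comp_sub, Preadditive.sub_comp, Category.id_comp,
            Category.assoc]
      _ = sc j - sc (j+1) ≫ e := by rw [c1, c2]
      _ = sc j ≫ (𝟙 N - e) + Pi.π (fun _ : ℕ => N) j ≫ e := by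
          rw [hsce j, Preadditive.comp_sub, Category.comp_id]; abel
      _ = Pi.π (fun _ : ℕ => N) j ≫ (𝟙 N - e) + Pi.π (fun _ : ℕ => N) j ≫ e := by rw [hinv j]
      _ = Pi.π (fun _ : ℕ => N) j := by
          rw [Preadditive.comp_sub, Category.comp_id]; abel
      _ = 𝟙 _ ≫ Pi.π (fun _ : ℕ => N) j := by rw [Category.id_comp]
  -- the homotopy-limit triangle of the idempotent tower
  obtain ⟨H, f, hh, hHtri⟩ := distinguished_cocone_triangle₁ (𝟙 (∏ᶜ (fun _ : ℕ => N) : T) - eh)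
  have hmor12 : f ≫ (𝟙 (∏ᶜ (fun _ : ℕ => N) : T) - eh) = 0 :=
    comp_distTriang_mor_zero₁₂ _ hHtri
  have hfeh : f ≫ eh = f := by
    have h12 := hmor12
    rw [Preadditive.comp_sub, Category.comp_id, sub_eq_zero] at h12
    exact h12.symm
  have hh0 : hh = 0 := by
    have h23 : (𝟙 (∏ᶜ (fun _ : ℕ => N) : T) - eh) ≫ hh = 0 :=
      comp_distTriang_mor_zero₂₃ _ hHtri
    calc hh = (Pi.lift sc ≫ (𝟙 _ - eh)) ≫ hh := by rw [hsec, Category.id_comp]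
      _ = Pi.lift sc ≫ ((𝟙 _ - eh) ≫ hh) := by rw [Category.assoc]
      _ = 0 := by rw [h23, comp_zero]
  have hfmono : Mono f := Triangle.mono₁ _ hHtri hh0
  -- β and γ
  set kB : B ⟶ (∏ᶜ (fun _ : ℕ => N) : T) := Pi.lift (fun _ => i) with hkB
  have hkB0 : kB ≫ (𝟙 (∏ᶜ (fun _ : ℕ => N) : T) - eh) = 0 := by
    apply Pi.hom_ext; intro j
    have d1 : kB ≫ Pi.π (fun _ : ℕ => N) j = i := by simp [hkB]
    have d2 : kB ≫ eh ≫ Pi.π (fun _ : ℕ => N) j = i := by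
      rw [ehpi j, ← Category.assoc]
      have : kB ≫ Pi.π (fun _ : ℕ => N) (j+1) = i := by simp [hkB]
      rw [this, hie]
    calc (kB ≫ (𝟙 _ - eh)) ≫ Pi.π (fun _ : ℕ => N) j
        = kB ≫ Pi.π (fun _ : ℕ => N) j - kB ≫ eh ≫ Pi.π (fun _ : ℕ => N) j := by
          simp only [Preadditive.comp_sub, Preadditive.sub_comp, Category.id_comp,
            Category.assoc]
      _ = i - i := by rw [d1, d2]
      _ = 0 ≫ Pi.π (fun _ : ℕ => N) j := by rw [sub_self, zero_comp]
  obtain ⟨β, hβ⟩ : ∃ β : B ⟶ H, kB = β ≫ (Triangle.mk f (𝟙 (∏ᶜ (fun _ : ℕ => N) : T) - eh) hh).mor₁ := Triangle.coyoneda_exact₂ _ hHtri kB hkB0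
  change kB = β ≫ f at hβ
  set γ : H ⟶ B := f ≫ Pi.π (fun _ : ℕ => N) 0 ≫ p with hγ
  have hβγ : β ≫ γ = 𝟙 B := by
    rw [hγ, ← Category.assoc, ← hβ]
    have : kB ≫ Pi.π (fun _ : ℕ => N) 0 = i := by simp [hkB]
    rw [← Category.assoc, this, hip]
  -- chain identities for f
  have hc1 : ∀ j, f ≫ Pi.π (fun _ : ℕ => N) j = f ≫ Pi.π (fun _ : ℕ => N) (j+1) ≫ e := by
    intro j
    conv_lhs => rw [← hfeh, Category.assoc, ehpi j]
  have hc2 : ∀ j, f ≫ Pi.π (fun _ : ℕ => N) j ≫ e = f ≫ Pi.π (fun _ : ℕ => N) j := by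
    intro j
    calc f ≫ Pi.π (fun _ : ℕ => N) j ≫ e
        = (f ≫ Pi.π (fun _ : ℕ => N) j) ≫ e := by rw [Category.assoc]
      _ = (f ≫ Pi.π (fun _ : ℕ => N) (j+1) ≫ e) ≫ e := by rw [hc1 j]
      _ = f ≫ Pi.π (fun _ : ℕ => N) (j+1) ≫ (e ≫ e) := by
          simp only [Category.assoc]
      _ = f ≫ Pi.π (fun _ : ℕ => N) (j+1) ≫ e := by rw [he2]
      _ = f ≫ Pi.π (fun _ : ℕ => N) j := (hc1 j).symm
  have hc3 : ∀ j, f ≫ Pi.π (fun _ : ℕ => N) j = f ≫ Pi.π (fun _ : ℕ => N) 0 := by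
    intro j; induction j with
    | zero => rfl
    | succ j ih =>
        have : f ≫ Pi.π (fun _ : ℕ => N) j = f ≫ Pi.π (fun _ : ℕ => N) (j+1) := by
          rw [hc1 j, hc2 (j+1)]
        rw [← this, ih]
  have hγβ : γ ≫ β = 𝟙 H := by
    rw [← cancel_mono f, Category.assoc, ← hβ, Category.id_comp, hγ]
    apply Pi.hom_ext; intro j
    have d1 : kB ≫ Pi.π (fun _ : ℕ => N) j = i := by simp [hkB]
    calc ((f ≫ Pi.π (fun _ : ℕ => N) 0 ≫ p) ≫ kB) ≫ Pi.π (fun _ : ℕ => N) j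
        = f ≫ Pi.π (fun _ : ℕ => N) 0 ≫ p ≫ (kB ≫ Pi.π (fun _ : ℕ => N) j) := by
          simp only [Category.assoc]
      _ = f ≫ Pi.π (fun _ : ℕ => N) 0 ≫ (p ≫ i) := by rw [d1]
      _ = f ≫ Pi.π (fun _ : ℕ => N) 0 ≫ e := by rw [he]
      _ = f ≫ Pi.π (fun _ : ℕ => N) 0 := hc2 0
      _ = f ≫ Pi.π (fun _ : ℕ => N) j := (hc3 j).symm
  have hHS : H ∈ S := by
    refine ext_mem S hS (Triangle.mk f (𝟙 (∏ᶜ (fun _ : ℕ => N) : T) - eh) hh).invRotate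
      (inv_rot_of_distTriang _ hHtri) ?_ ?_
    · exact S_shift_all S hS (-1) _ hPN
    · exact hPN
  exact hS.1 H B ⟨γ, β, hγβ, hβγ⟩ hHS

end MinAux

/-- if every object of `C` is weak cocompact with respect to any
`Σ^{≥0}C`-cophantom tower, `C` is closed under all shifts, and the stable pair
exists, then `(^⊥(Σ^ℤ C), (^⊥(Σ^ℤ C))^⊥)` is a stable torsion pair and
`(^⊥(Σ^ℤ C))^⊥` is the smallest colocalizing subcategory of `T` containing `C`. -/
theorem stable_pair_and_smallest_colocalizing (C : Set T)
    (hshift : ∀ (n : ℤ), ∀ c ∈ C, (c⟦n⟧ : T) ∈ C)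
    (hw : ∀ c ∈ C, ∀ (Y : ℕ → T) (ψ : ∀ i, Y (i + 1) ⟶ Y i),
      (∀ i, ∀ c' ∈ C, ∀ n : ℕ, ∀ g : Y i ⟶ (c'⟦(n : ℤ)⟧ : T), ψ i ≫ g = 0) →
      ∀ (L : T) (p : L ⟶ ∏ᶜ Y) (q : (∏ᶜ Y : T) ⟶ L⟦(1 : ℤ)⟧),
        (Triangle.mk p (𝟙 (∏ᶜ Y) - Pi.lift (fun i => Pi.π Y (i + 1) ≫ ψ i)) q
          ∈ distTriang T) →
        ∀ f : L ⟶ c, f = 0)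
    (Xcl Ycl : Set T)
    (hXcl : Xcl = {A : T | ∀ c ∈ C, ∀ n : ℤ, ∀ f : A ⟶ (c⟦n⟧ : T), f = 0})
    (hYcl : Ycl = {B : T | ∀ A ∈ Xcl, ∀ f : A ⟶ B, f = 0})
    -- the stable pair exists: every object admits a decomposition triangle
    (hpair : ∀ t : T, ∃ (A B : T) (f : A ⟶ t) (g : t ⟶ B) (h : B ⟶ A⟦(1 : ℤ)⟧),
      (Triangle.mk f g h ∈ distTriang T) ∧ A ∈ Xcl ∧ B ∈ Ycl) :
    -- `(Xcl, Ycl)` is a stable torsion pair …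
    ((∀ A ∈ Xcl, ∀ B ∈ Ycl, ∀ f : A ⟶ B, f = 0) ∧
      (∀ t : T, ∃ (A B : T) (f : A ⟶ t) (g : t ⟶ B) (h : B ⟶ A⟦(1 : ℤ)⟧),
        (Triangle.mk f g h ∈ distTriang T) ∧ A ∈ Xcl ∧ B ∈ Ycl) ∧
      (∀ A : T, A ∈ Xcl ↔ (A⟦(1 : ℤ)⟧ : T) ∈ Xcl)) ∧
    (Colocalizing Ycl ∧ C ⊆ Ycl ∧
      ∀ S : Set T, Colocalizing S → C ⊆ S → Ycl ⊆ S) := by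
  have hXeq : Xcl = XclS C := hXcl
  have hYeq : Ycl = YclS C := by rw [hYcl, hXeq]; rfl
  subst hXeq
  constructor
  · refine ⟨?_, hpair, ?_⟩
    · intro A hA B hB f
      rw [hYeq] at hB
      exact hB A hA f
    · intro A
      constructor
      · intro hA; exact XclS_shift hshift hA 1
      · intro hA; exact XclS_unshift hshift hA
  · refine ⟨⟨?_, ?_, ?_, ?_⟩, ?_, ?_⟩
    · intro A B e hA
      rw [hYeq] at hA ⊢
      exact YclS_iso e hA
    · intro A hA
      rw [hYeq] at hA ⊢
      exact ⟨YclS_shift hshift hA 1, YclS_shift hshift hA (-1)⟩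
    · intro A B Z f g h hT hA hZ
      rw [hYeq] at hA hZ ⊢
      exact YclS_ext f g h hT hA hZ
    · intro ι f hf
      rw [hYeq] at hf ⊢
      exact YclS_prod f (fun i => hf i)
    · rw [hYeq]
      exact C_subset_YclS
    · intro S hS hCS B hB
      rw [hYeq] at hB
      classical
      -- the coreflection-fiber tower over B
      choose KK kk dd hKK using fun Y : T => distinguished_cocone_triangle₁ (corMap C S Y)
      set KT : ℕ → T := fun n => Nat.rec B (fun _ prev => KK prev) n with hKTdef
      -- memberships in Ycl
      have hKTY : ∀ n, KT n ∈ YclS C := by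
        intro n; induction n with
        | zero => exact hB
        | succ n ih =>
            refine ext_mem_Ycl C
              (Triangle.mk (kk (KT n)) (corMap C S (KT n)) (dd (KT n))).invRotate
              (inv_rot_of_distTriang _ (hKK (KT n))) ?_ ?_
            · exact YclS_shift hshift (corObj_mem_Ycl C S (KT n)) (-1)
            · exact ih
      -- conullity of the tower maps
      have hcon : ∀ (Y : T), IsCon C S (kk Y) := by
        intro Y s' hs hy h
        set idx : corIdx C S Y := ⟨⟨s', hs, hy⟩, h⟩ with hidx
        have huniv : corMap C S Y ≫ Pi.π _ idx = h := cor_univ C S hs hy h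
        have h12 : kk Y ≫ corMap C S Y = 0 := comp_distTriang_mor_zero₁₂ _ (hKK Y)
        calc kk Y ≫ h = kk Y ≫ corMap C S Y ≫ Pi.π _ idx := by rw [huniv]
          _ = (kk Y ≫ corMap C S Y) ≫ Pi.π _ idx := by rw [Category.assoc]
          _ = 0 := by rw [h12, zero_comp]
      -- the conull chain
      have step : ∀ (n : ℕ) (g : KT 1 ⟶ KT n), IsCon C S g →
          ∃ g' : KT 1 ⟶ KT (n+1), g' ≫ kk (KT n) = g ∧ IsCon C S g' := by
        intro n g hg
        exact conull_lift C S hshift hS (hKK (KT n)) g hg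
      set F : ∀ n : ℕ, Σ' g : KT 1 ⟶ KT n, IsCon C S g := fun n =>
        Nat.rec ⟨kk B, hcon B⟩
          (fun n prev => ⟨(step n prev.1 prev.2).choose,
            (step n prev.1 prev.2).choose_spec.2⟩) n with hFdef
      have hF0 : (F 0).1 = kk B := rfl
      have hFcomp : ∀ n, (F (n+1)).1 ≫ kk (KT n) = (F n).1 := fun n =>
        (step n (F n).1 (F n).2).choose_spec.1
      -- apply hw: the homotopy limit of the tower vanishes
      obtain ⟨L, pL, qL, hLtri⟩ := distinguished_cocone_triangle₁
        (𝟙 (∏ᶜ KT : T) - Pi.lift (fun n => Pi.π KT (n+1) ≫ kk (KT n)))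
      have hcoph : ∀ n, ∀ c' ∈ C, ∀ (m : ℕ),
          ∀ g : KT n ⟶ ((c'⟦((m:ℕ) : ℤ)⟧ : T)), kk (KT n) ≫ g = 0 := by
        intro n c' hc' m g
        exact hcon (KT n) _ (S_shift_all S hS _ _ (hCS hc'))
          (C_shift_mem_YclS hshift hc' _) g
      have hLX : L ∈ XclS C := by
        intro c hc m fmap
        exact hw (c⟦m⟧) (hshift m c hc) KT (fun n => kk (KT n)) hcoph L pL qL hLtri fmap
      have hprodY : (∏ᶜ KT : T) ∈ YclS C := YclS_prod _ hKTY
      have hLY : L ∈ YclS C := by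
        refine ext_mem_Ycl C (Triangle.mk pL
          (𝟙 (∏ᶜ KT : T) - Pi.lift (fun n => Pi.π KT (n+1) ≫ kk (KT n))) qL).invRotate
          (inv_rot_of_distTriang _ hLtri) ?_ ?_
        · exact YclS_shift hshift hprodY (-1)
        · exact hprodY
      have hL0 : (𝟙 L : L ⟶ L) = 0 := hLY L hLX (𝟙 L)
      -- the compatible chain assembles to a map into the product killing the telescope
      have hLamM : Pi.lift (fun n => (F n).1) ≫
          (𝟙 (∏ᶜ KT : T) - Pi.lift (fun n => Pi.π KT (n+1) ≫ kk (KT n)))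
          = (0 : KT 1 ⟶ (∏ᶜ KT : T)) := by
        apply Pi.hom_ext; intro n
        have a1 : Pi.lift (fun n => (F n).1) ≫ Pi.π KT n = (F n).1 := by simp
        have a2 : Pi.lift (fun n => (F n).1) ≫
            Pi.lift (fun m => Pi.π KT (m+1) ≫ kk (KT m)) ≫ Pi.π KT n
            = (F (n+1)).1 ≫ kk (KT n) := by
          have b1 : Pi.lift (fun m => Pi.π KT (m+1) ≫ kk (KT m)) ≫ Pi.π KT n
              = Pi.π KT (n+1) ≫ kk (KT n) := by simp
          rw [b1, ← Category.assoc]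
          have b2 : Pi.lift (fun n => (F n).1) ≫ Pi.π KT (n+1) = (F (n+1)).1 := by simp
          rw [b2]
        calc (Pi.lift (fun n => (F n).1) ≫
            (𝟙 (∏ᶜ KT : T) - Pi.lift (fun m => Pi.π KT (m+1) ≫ kk (KT m)))) ≫ Pi.π KT n
            = Pi.lift (fun n => (F n).1) ≫ Pi.π KT n
              - Pi.lift (fun n => (F n).1) ≫
                  Pi.lift (fun m => Pi.π KT (m+1) ≫ kk (KT m)) ≫ Pi.π KT n := by
              simp only [Preadditive.comp_sub, Preadditive.sub_comp, Category.id_comp,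
                Category.assoc]
          _ = (F n).1 - (F (n+1)).1 ≫ kk (KT n) := by rw [a1, a2]
          _ = (F n).1 - (F n).1 := by rw [hFcomp n]
          _ = 0 ≫ Pi.π KT n := by rw [sub_self, zero_comp]
      obtain ⟨w, hwfac⟩ : ∃ w : KT 1 ⟶ L, Pi.lift (fun n => (F n).1) = w ≫ (Triangle.mk pL
            (𝟙 (∏ᶜ KT : T) - Pi.lift (fun n => Pi.π KT (n+1) ≫ kk (KT n))) qL).mor₁ := Triangle.coyoneda_exact₂ _ hLtri (Pi.lift (fun n => (F n).1)) hLamM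
      change Pi.lift (fun n => (F n).1) = w ≫ pL at hwfac
      have hw0 : w = 0 := by
        have : w ≫ 𝟙 L = w := Category.comp_id w
        rw [hL0, comp_zero] at this
        exact this.symm
      have hLam0 : Pi.lift (fun n => (F n).1) = (0 : KT 1 ⟶ (∏ᶜ KT : T)) := by
        rw [hwfac, hw0, zero_comp]
      -- hence the first coreflection-fiber map vanishes
      have hk0 : kk B = 0 := by
        have h1 : Pi.lift (fun n => (F n).1) ≫ Pi.π KT 0 = kk B := by
          have := hF0; simp [← this]
        rw [hLam0, zero_comp] at h1
        exact h1.symm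
      -- so B is a retract of its coreflection, which lies in S
      obtain ⟨σ, hσ⟩ := Triangle.yoneda_exact₂ _ (hKK B) (𝟙 B)
        (by
          have : kk B ≫ 𝟙 B = 0 := by rw [hk0, zero_comp]
          exact this)
      simp only [Triangle.mk_mor₂] at hσ
      exact retract_mem S hS (corObj_mem_S C S hS B) (corMap C S B) σ hσ.symm
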